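/- (From the paper's Corollary 4.3.) Assume additionally that P is dense in B (for every b ∈ B with b ≠ ⊥ there is p ∈ P with p ≤ b), that q ⊓ p ∈ P whenever p ∈ P, q ∈ Q and ⊥ ≠ q ≤ π(p), and that R(q ⊓ p, q) whenever p ∈ P, q ∈ Q ∩ P, ⊥ ≠ q ≤ π(p) and R(p, π(p)). Then for every i ∈ ℤ, the set R_i = {p̄ ∈ P^ℤ_f : p̄(i) = (p̄(i)^P, ⊤, ⊤)} is dense in P^ℤ_f: every p̄ ∈ P^ℤ_f has an extension in R_i. -/

import Mathlib

namespace Stmt9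

variable {B : Type*} [CompleteBooleanAlgebra B]

/-- `A` is a complete subalgebra of the complete Boolean algebra `B`. -/
def IsCompleteSubalgebra (A : Set B) : Prop :=
  ⊤ ∈ A ∧ (∀ a ∈ A, aᶜ ∈ A) ∧ ∀ S ⊆ A, sSup S ∈ A

/-- The canonical projection onto `A`. -/
def proj (A : Set B) (b : B) : B := sInf {a | a ∈ A ∧ b ≤ a}

/-- The meet `m(p̂) = p ⊓ b₀ ⊓ b₁` of the components of a triple. -/
def bm (t : B × B × B) : B := t.1 ⊓ t.2.1 ⊓ t.2.2

/-- The ordering of the blowup: `p̂ ≤ q̂` iff `p̂^P ≤ q̂^P` and `m(p̂) ≤ m(q̂)`. -/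
def bLE (t s : B × B × B) : Prop := t.1 ≤ s.1 ∧ bm t ≤ bm s

/-- The amalgamation setting of the paper: complete subalgebras `Q ⊆ B₀ ∩ B₁`
of `B`, a set `P` of nonzero elements of `B`, an isomorphism `f : B₀ → B₁`
fixing `Q` pointwise and commuting with the projection to `Q`, and a binary
relation `R` on `P` (playing the role of `≤ᵒ^{λ₀}` to `Q`-parts) such that
`π(p) ∈ P` and `R(π(p), π(p))` for every `p ∈ P`. -/
structure Setting (B : Type*) [CompleteBooleanAlgebra B] where
  Q : Set B
  B0 : Set B
  B1 : Set B
  P : Set B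
  R : B → B → Prop
  hQ : IsCompleteSubalgebra Q
  hB0 : IsCompleteSubalgebra B0
  hB1 : IsCompleteSubalgebra B1
  hQB0 : Q ⊆ B0
  hQB1 : Q ⊆ B1
  hPne : ∀ p ∈ P, p ≠ ⊥
  f : B → B
  finv : B → B
  f_mem : ∀ b ∈ B0, f b ∈ B1
  finv_mem : ∀ b ∈ B1, finv b ∈ B0
  finv_f : ∀ b ∈ B0, finv (f b) = b
  f_finv : ∀ b ∈ B1, f (finv b) = b
  f_inf : ∀ a ∈ B0, ∀ b ∈ B0, f (a ⊓ b) = f a ⊓ f b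
  f_sup : ∀ a ∈ B0, ∀ b ∈ B0, f (a ⊔ b) = f a ⊔ f b
  f_compl : ∀ a ∈ B0, f aᶜ = (f a)ᶜ
  f_fixQ : ∀ q ∈ Q, f q = q
  f_proj : ∀ b ∈ B0, proj Q (f b) = proj Q b
  R_proj_mem : ∀ p ∈ P, proj Q p ∈ P
  R_proj_refl : ∀ p ∈ P, R (proj Q p) (proj Q p)

/-- `F(x) = f(π₀(x))`. -/
def Setting.F (S : Setting B) (x : B) : B := S.f (proj S.B0 x)

/-- `G(x) = f⁻¹(π₁(x))`. -/
def Setting.G (S : Setting B) (x : B) : B := S.finv (proj S.B1 x)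

/-- Membership in the blowup `P̂`. -/
def Setting.InBlowup (S : Setting B) (t : B × B × B) : Prop :=
  t.1 ∈ S.P ∧ t.2.1 ∈ S.B0 ∧ t.2.2 ∈ S.B1 ∧ proj S.Q (bm t) = proj S.Q t.1

/-- Membership in the amalgamation `P^ℤ_f`: each coordinate is in the blowup,
the linking equations hold, and `R(p̄(k)^P, π(p̄(k)^P))` for all but finitely
many `k`. -/
def Setting.InAmalg (S : Setting B) (pb : ℤ → B × B × B) : Prop :=
  (∀ k : ℤ, S.InBlowup (pb k)) ∧
  (∀ k : ℤ, S.f (proj S.B0 (bm (pb k))) = proj S.B1 (bm (pb (k + 1)))) ∧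
  {k : ℤ | ¬ S.R (pb k).1 (proj S.Q (pb k).1)}.Finite

/-- The coordinatewise ordering of the amalgamation. -/
def amLE (pb qb : ℤ → B × B × B) : Prop := ∀ k : ℤ, bLE (pb k) (qb k)

/-- The embedding `e : P̂ → P^ℤ_f`. -/
def Setting.e (S : Setting B) (u : B × B × B) : ℤ → B × B × B := fun i =>
  if i = 0 then u
  else if 0 < i then (proj S.Q u.1, ⊤, (S.F)^[i.toNat] (bm u))
  else (proj S.Q u.1, (S.G)^[(-i).toNat] (bm u), ⊤)

section AuxLemmas

variable {A : Set B}

theorem le_proj' (b : B) : b ≤ proj A b := le_sInf fun _ ha => ha.2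

theorem proj_le' {a b : B} (ha : a ∈ A) (h : b ≤ a) : proj A b ≤ a := sInf_le ⟨ha, h⟩

theorem proj_mono' {b c : B} (h : b ≤ c) : proj A b ≤ proj A c :=
  le_sInf fun _ ha => sInf_le ⟨ha.1, h.trans ha.2⟩

theorem IsCompleteSubalgebra.sup_mem (hA : IsCompleteSubalgebra A) {a b : B}
    (ha : a ∈ A) (hb : b ∈ A) : a ⊔ b ∈ A := by
  have := hA.2.2 {a, b} (by intro x hx; rcases hx with rfl | rfl <;> assumption)
  rwa [sSup_pair] at this

theorem IsCompleteSubalgebra.inf_mem (hA : IsCompleteSubalgebra A) {a b : B}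
    (ha : a ∈ A) (hb : b ∈ A) : a ⊓ b ∈ A := by
  have := hA.2.1 _ (hA.sup_mem (hA.2.1 a ha) (hA.2.1 b hb))
  rwa [compl_sup, compl_compl, compl_compl] at this

theorem IsCompleteSubalgebra.sInf_mem (hA : IsCompleteSubalgebra A) {S : Set B}
    (hS : S ⊆ A) : sInf S ∈ A := by
  have h1 : sSup ((·ᶜ) '' S) ∈ A := hA.2.2 _ (by
    rintro x ⟨a, ha, rfl⟩; exact hA.2.1 a (hS ha))
  have h2 := hA.2.1 _ h1
  have h3 : (sSup ((·ᶜ) '' S))ᶜ = sInf S := by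
    rw [compl_sSup]
    rw [sInf_eq_iInf]
    rw [iInf_image]
    simp
  rwa [h3] at h2

theorem IsCompleteSubalgebra.proj_mem (hA : IsCompleteSubalgebra A) (b : B) :
    proj A b ∈ A := hA.sInf_mem fun _ ha => ha.1

theorem proj_of_mem {a : B} (ha : a ∈ A) : proj A a = a :=
  le_antisymm (proj_le' ha le_rfl) (le_proj' a)

theorem IsCompleteSubalgebra.bot_mem (hA : IsCompleteSubalgebra A) : ⊥ ∈ A := by
  have := hA.2.1 _ hA.1; rwa [compl_top] at this

theorem proj_bot (hA : IsCompleteSubalgebra A) : proj A (⊥ : B) = ⊥ :=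
  le_bot_iff.1 (proj_le' hA.bot_mem le_rfl)

theorem proj_inf_of_mem (hA : IsCompleteSubalgebra A) (b : B) {c : B} (hc : c ∈ A) :
    proj A (b ⊓ c) = proj A b ⊓ c := by
  apply le_antisymm
  · exact le_inf (proj_mono' inf_le_left) (proj_le' hc inf_le_right)
  · refine le_sInf fun a ha => ?_
    obtain ⟨haA, hle⟩ := ha
    have h1 : b ≤ a ⊔ cᶜ := by
      have h2 : b ≤ (b ⊓ c) ⊔ cᶜ := by rw [sup_inf_right]; simp
      exact h2.trans (sup_le_sup_right hle _)
    have h2 : proj A b ≤ a ⊔ cᶜ := proj_le' (hA.sup_mem haA (hA.2.1 c hc)) h1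
    calc proj A b ⊓ c ≤ (a ⊔ cᶜ) ⊓ c := inf_le_inf_right _ h2
      _ ≤ a := by rw [inf_sup_right]; simp

theorem proj_proj (hA : IsCompleteSubalgebra A) {Q : Set B} (hQA : Q ⊆ A) (b : B) :
    proj Q (proj A b) = proj Q b := by
  unfold proj
  congr 1
  ext a
  exact ⟨fun ⟨hq, h⟩ => ⟨hq, (le_proj' b).trans h⟩,
    fun ⟨hq, h⟩ => ⟨hq, proj_le' (hQA hq) h⟩⟩

end AuxLemmas

section SettingAux

variable (S : Setting B)

theorem Setting.f_mono {a b : B} (ha : a ∈ S.B0) (hb : b ∈ S.B0) (h : a ≤ b) :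
    S.f a ≤ S.f b := by
  have h1 : S.f (a ⊓ b) = S.f a ⊓ S.f b := S.f_inf a ha b hb
  rw [inf_eq_left.2 h] at h1
  rw [h1]; exact inf_le_right

theorem Setting.finv_mono {a b : B} (ha : a ∈ S.B1) (hb : b ∈ S.B1) (h : a ≤ b) :
    S.finv a ≤ S.finv b := by
  have h0 : S.finv a ⊓ S.finv b ∈ S.B0 :=
    S.hB0.inf_mem (S.finv_mem a ha) (S.finv_mem b hb)
  have h1 : S.f (S.finv a ⊓ S.finv b) = a ⊓ b := by
    rw [S.f_inf _ (S.finv_mem a ha) _ (S.finv_mem b hb), S.f_finv a ha, S.f_finv b hb]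
  rw [inf_eq_left.2 h] at h1
  have h2 := congrArg S.finv h1
  rw [S.finv_f _ h0] at h2
  rw [← h2]; exact inf_le_right

theorem Setting.F_mem (x : B) : S.F x ∈ S.B1 := S.f_mem _ (S.hB0.proj_mem x)

theorem Setting.G_mem (x : B) : S.G x ∈ S.B0 := S.finv_mem _ (S.hB1.proj_mem x)

theorem Setting.F_proj (x : B) : proj S.Q (S.F x) = proj S.Q x :=
  (S.f_proj _ (S.hB0.proj_mem x)).trans (proj_proj S.hB0 S.hQB0 x)

theorem Setting.G_proj (x : B) : proj S.Q (S.G x) = proj S.Q x := by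
  have hy : proj S.B1 x ∈ S.B1 := S.hB1.proj_mem x
  have h1 := S.f_proj _ (S.finv_mem _ hy)
  rw [S.f_finv _ hy] at h1
  rw [Setting.G, ← h1, proj_proj S.hB1 S.hQB1 x]

theorem Setting.F_mono {x y : B} (h : x ≤ y) : S.F x ≤ S.F y :=
  S.f_mono (S.hB0.proj_mem x) (S.hB0.proj_mem y) (proj_mono' h)

theorem Setting.G_mono {x y : B} (h : x ≤ y) : S.G x ≤ S.G y :=
  S.finv_mono (S.hB1.proj_mem x) (S.hB1.proj_mem y) (proj_mono' h)

end SettingAux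

/-- Forward auxiliary sequence used in the proof of `Ri_dense`. -/
def fwd (S : Setting B) (pb : ℤ → B × B × B) (i : ℤ) (q p : B) : ℕ → B
  | 0 => p
  | (j+1) => q ⊓ bm (pb (i + j + 1)) ⊓ S.F (fwd S pb i q p j)

/-- Backward auxiliary sequence used in the proof of `Ri_dense`. -/
def bwd (S : Setting B) (pb : ℤ → B × B × B) (i : ℤ) (q p : B) : ℕ → B
  | 0 => p
  | (j+1) => q ⊓ bm (pb (i - j - 1)) ⊓ S.G (bwd S pb i q p j)

/-- The meet sequence of the extension constructed in `Ri_dense`. -/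
def mseq (S : Setting B) (pb : ℤ → B × B × B) (i : ℤ) (q p : B) : ℤ → B :=
  fun k => if i ≤ k then fwd S pb i q p (k - i).toNat else bwd S pb i q p (i - k).toNat

theorem mseq_self (S : Setting B) (pb : ℤ → B × B × B) (i : ℤ) (q p : B) :
    mseq S pb i q p i = p := by simp [mseq, fwd]

theorem mseq_up (S : Setting B) (pb : ℤ → B × B × B) (i : ℤ) (q p : B) {k : ℤ}
    (hk : i ≤ k) :
    mseq S pb i q p (k+1) = q ⊓ bm (pb (k+1)) ⊓ S.F (mseq S pb i q p k) := by
  have h1 : (k + 1 - i).toNat = (k - i).toNat + 1 := by omega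
  have h2 : i + ((k - i).toNat : ℤ) = k := by omega
  simp only [mseq, if_pos hk, if_pos (by omega : i ≤ k + 1), h1, fwd, h2]

theorem mseq_dn (S : Setting B) (pb : ℤ → B × B × B) (i : ℤ) (q p : B) {k : ℤ}
    (hk : k ≤ i) :
    mseq S pb i q p (k-1) = q ⊓ bm (pb (k-1)) ⊓ S.G (mseq S pb i q p k) := by
  have hmw : mseq S pb i q p k = bwd S pb i q p (i - k).toNat := by
    by_cases h : i ≤ k
    · have : k = i := le_antisymm hk h
      subst this
      simp [mseq, fwd, bwd]
    · simp [mseq, if_neg h]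
  have h1 : (i - (k - 1)).toNat = (i - k).toNat + 1 := by omega
  have h2 : i - ((i - k).toNat : ℤ) = k := by omega
  rw [hmw]
  simp only [mseq, if_neg (by omega : ¬ i ≤ k - 1), h1, bwd, h2]

section Key

variable (S : Setting B) (pb : ℤ → B × B × B)

theorem keyF (hLink : ∀ k : ℤ, S.f (proj S.B0 (bm (pb k))) = proj S.B1 (bm (pb (k + 1))))
    {q : B} (hqQ : q ∈ S.Q) (k : ℤ) (x : B) (hxq : x ≤ q) (hxM : x ≤ bm (pb k))
    (hxp : proj S.Q x = q) :
    proj S.B1 (q ⊓ bm (pb (k+1)) ⊓ S.F x) = S.F x := by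
  have hFq : S.F x ≤ q := by
    have h := le_proj' (A := S.Q) (S.F x)
    rwa [S.F_proj, hxp] at h
  have hFM : S.F x ≤ proj S.B1 (bm (pb (k+1))) := by
    rw [← hLink k]
    exact S.f_mono (S.hB0.proj_mem x) (S.hB0.proj_mem _) (proj_mono' hxM)
  have hmem : q ⊓ S.F x ∈ S.B1 := S.hB1.inf_mem (S.hQB1 hqQ) (S.F_mem x)
  have hshape : q ⊓ bm (pb (k+1)) ⊓ S.F x = bm (pb (k+1)) ⊓ (q ⊓ S.F x) := by
    refine eq_of_forall_le_iff fun c => ?_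
    simp only [le_inf_iff]; tauto
  rw [hshape, proj_inf_of_mem S.hB1 _ hmem]
  exact le_antisymm (inf_le_right.trans inf_le_right)
    (le_inf hFM (le_inf hFq le_rfl))

theorem keyG (hLink : ∀ k : ℤ, S.f (proj S.B0 (bm (pb k))) = proj S.B1 (bm (pb (k + 1))))
    {q : B} (hqQ : q ∈ S.Q) (k : ℤ) (x : B) (hxq : x ≤ q) (hxM : x ≤ bm (pb k))
    (hxp : proj S.Q x = q) :
    proj S.B0 (q ⊓ bm (pb (k-1)) ⊓ S.G x) = S.G x := by
  have hGq : S.G x ≤ q := by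
    have h := le_proj' (A := S.Q) (S.G x)
    rwa [S.G_proj, hxp] at h
  have hGM : S.G x ≤ proj S.B0 (bm (pb (k-1))) := by
    have h1 : proj S.B1 x ≤ proj S.B1 (bm (pb k)) := proj_mono' hxM
    have h2 := hLink (k-1)
    rw [sub_add_cancel] at h2
    have h3 : S.G x ≤ S.finv (S.f (proj S.B0 (bm (pb (k-1))))) := by
      rw [h2]
      exact S.finv_mono (S.hB1.proj_mem x) (S.hB1.proj_mem _) h1
    rwa [S.finv_f _ (S.hB0.proj_mem _)] at h3
  have hmem : q ⊓ S.G x ∈ S.B0 := S.hB0.inf_mem (S.hQB0 hqQ) (S.G_mem x)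
  have hshape : q ⊓ bm (pb (k-1)) ⊓ S.G x = bm (pb (k-1)) ⊓ (q ⊓ S.G x) := by
    refine eq_of_forall_le_iff fun c => ?_
    simp only [le_inf_iff]; tauto
  rw [hshape, proj_inf_of_mem S.hB0 _ hmem]
  exact le_antisymm (inf_le_right.trans inf_le_right)
    (le_inf hGM (le_inf hGq le_rfl))

theorem mseq_inv (hLink : ∀ k : ℤ, S.f (proj S.B0 (bm (pb k))) = proj S.B1 (bm (pb (k + 1))))
    {q : B} (hqQ : q ∈ S.Q) (i : ℤ) {p : B} (hpq : p ≤ q) (hpM : p ≤ bm (pb i))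
    (hpp : proj S.Q p = q) : ∀ k : ℤ, mseq S pb i q p k ≤ q ∧ mseq S pb i q p k ≤ bm (pb k) ∧
    proj S.Q (mseq S pb i q p k) = q := by
  have hshift : ∀ d : ℤ, mseq S pb i q p (i + d) ≤ q ∧
      mseq S pb i q p (i + d) ≤ bm (pb (i + d)) ∧ proj S.Q (mseq S pb i q p (i + d)) = q := by
    intro d
    induction d using Int.induction_on with
    | zero => rw [add_zero, mseq_self]; exact ⟨hpq, hpM, hpp⟩
    | succ n ih =>
      obtain ⟨ih1, ih2, ih3⟩ := ih
      have hcast : i + ((n : ℤ) + 1) = (i + n) + 1 := by ring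
      have hup := mseq_up S pb i q p (k := i + n) (by omega)
      have hkey := keyF S pb hLink hqQ (i + n) _ ih1 ih2 ih3
      rw [hcast, hup]
      refine ⟨inf_le_left.trans inf_le_left, inf_le_left.trans inf_le_right, ?_⟩
      rw [← proj_proj S.hB1 S.hQB1, hkey, S.F_proj, ih3]
    | pred n ih =>
      obtain ⟨ih1, ih2, ih3⟩ := ih
      have hcast : i + (-(n : ℤ) - 1) = (i + -(n : ℤ)) - 1 := by ring
      have hdn := mseq_dn S pb i q p (k := i + -(n : ℤ)) (by omega)
      have hkey := keyG S pb hLink hqQ (i + -(n : ℤ)) _ ih1 ih2 ih3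
      rw [hcast, hdn]
      refine ⟨inf_le_left.trans inf_le_left, inf_le_left.trans inf_le_right, ?_⟩
      rw [← proj_proj S.hB0 S.hQB0, hkey, S.G_proj, ih3]
  intro k
  have h := hshift (k - i)
  rwa [show i + (k - i) = k by ring] at h

theorem mseq_link (hLink : ∀ k : ℤ, S.f (proj S.B0 (bm (pb k))) = proj S.B1 (bm (pb (k + 1))))
    {q : B} (hqQ : q ∈ S.Q) (i : ℤ) {p : B} (hpq : p ≤ q) (hpM : p ≤ bm (pb i))
    (hpp : proj S.Q p = q) : ∀ k : ℤ, S.f (proj S.B0 (mseq S pb i q p k)) =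
    proj S.B1 (mseq S pb i q p (k+1)) := by
  intro k
  obtain ⟨h1, h2, h3⟩ := mseq_inv S pb hLink hqQ i hpq hpM hpp k
  obtain ⟨g1, g2, g3⟩ := mseq_inv S pb hLink hqQ i hpq hpM hpp (k+1)
  by_cases hik : i ≤ k
  · rw [mseq_up S pb i q p hik]
    exact (keyF S pb hLink hqQ k _ h1 h2 h3).symm
  · have hk1 : k + 1 ≤ i := by omega
    have hdn := mseq_dn S pb i q p (k := k+1) hk1
    rw [add_sub_cancel_right] at hdn
    have hkey := keyG S pb hLink hqQ (k+1) _ g1 g2 g3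
    rw [add_sub_cancel_right] at hkey
    rw [hdn, hkey]
    exact S.f_finv _ (S.hB1.proj_mem _)

end Key

/-- The extension constructed in `Ri_dense`. -/
def qbfun (S : Setting B) (pb : ℤ → B × B × B) (i : ℤ) (q p : B) : ℤ → B × B × B :=
  fun k =>
    if k = i then (p, ⊤, ⊤)
    else if i < k then
      (q ⊓ (pb k).1, q ⊓ (pb k).2.1, (pb k).2.2 ⊓ S.F (mseq S pb i q p (k-1)))
    else
      (q ⊓ (pb k).1, (pb k).2.1 ⊓ S.G (mseq S pb i q p (k+1)), q ⊓ (pb k).2.2)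

theorem qbfun_fst (S : Setting B) (pb : ℤ → B × B × B) (i : ℤ) (q p : B) {k : ℤ}
    (h : k ≠ i) : (qbfun S pb i q p k).1 = q ⊓ (pb k).1 := by
  simp only [qbfun, if_neg h]
  split_ifs <;> rfl

theorem qbfun_bm (S : Setting B) (pb : ℤ → B × B × B) (i : ℤ) (q p : B) (k : ℤ) :
    bm (qbfun S pb i q p k) = mseq S pb i q p k := by
  by_cases h1 : k = i
  · subst h1; simp [qbfun, bm, mseq_self]
  by_cases h2 : i < k
  · simp only [qbfun, if_neg h1, if_pos h2]
    have hup := mseq_up S pb i q p (k := k - 1) (by omega)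
    rw [sub_add_cancel] at hup
    rw [hup]
    refine eq_of_forall_le_iff fun c => ?_
    simp [bm, le_inf_iff]; tauto
  · have h3 : k + 1 ≤ i := by omega
    simp only [qbfun, if_neg h1, if_neg h2]
    have hdn := mseq_dn S pb i q p (k := k + 1) h3
    rw [add_sub_cancel_right] at hdn
    rw [hdn]
    refine eq_of_forall_le_iff fun c => ?_
    simp [bm, le_inf_iff]; tauto

/-- from Corollary 4.3: if `P` is dense in `B` and `P`, `R` are
suitably closed under meets with elements of `Q`, then for every `i ∈ ℤ` the
set `R_i = {p̄ ∈ P^ℤ_f : p̄(i) = (p̄(i)^P, ⊤, ⊤)}` is dense in `P^ℤ_f`. -/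
theorem Ri_dense (S : Setting B)
    (hPdense : ∀ b : B, b ≠ ⊥ → ∃ p ∈ S.P, p ≤ b)
    (h_meet : ∀ p ∈ S.P, ∀ q ∈ S.Q, q ≠ ⊥ → q ≤ proj S.Q p → q ⊓ p ∈ S.P)
    (h_Rmeet : ∀ p ∈ S.P, ∀ q, q ∈ S.Q → q ∈ S.P → q ≠ ⊥ → q ≤ proj S.Q p →
      S.R p (proj S.Q p) → S.R (q ⊓ p) q)
    (i : ℤ) (pb : ℤ → B × B × B) (hpb : S.InAmalg pb) :
    ∃ qb : ℤ → B × B × B, S.InAmalg qb ∧ amLE qb pb ∧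
      (qb i).2.1 = ⊤ ∧ (qb i).2.2 = ⊤ := by
  obtain ⟨hBl, hLink, hFin⟩ := hpb
  have projQQ1 : ∀ b : B, proj S.Q (proj S.B1 b) = proj S.Q b := proj_proj S.hB1 S.hQB1
  -- choose p below the meet of the i-th coordinate, and q its projection
  have hPi : (pb i).1 ∈ S.P := (hBl i).1
  have hMi_ne : bm (pb i) ≠ ⊥ := by
    intro h
    have h2 : proj S.Q (pb i).1 = ⊥ := by rw [← (hBl i).2.2.2, h, proj_bot S.hQ]
    exact S.hPne _ hPi (le_bot_iff.1 ((le_proj' _).trans_eq h2))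
  obtain ⟨p, hpP, hpMi⟩ := hPdense _ hMi_ne
  set q : B := proj S.Q p with hqdef
  have hqQ : q ∈ S.Q := S.hQ.proj_mem p
  have hqP : q ∈ S.P := S.R_proj_mem p hpP
  have hq_ne : q ≠ ⊥ := fun h => S.hPne p hpP (le_bot_iff.1 ((le_proj' p).trans_eq h))
  have hpq : p ≤ q := le_proj' p
  -- the projections of the meets of pb are constant
  have gstep : ∀ k : ℤ, proj S.Q (bm (pb k)) = proj S.Q (bm (pb (k+1))) := by
    intro k
    calc proj S.Q (bm (pb k)) = proj S.Q (proj S.B0 (bm (pb k))) :=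
          (proj_proj S.hB0 S.hQB0 _).symm
      _ = proj S.Q (S.f (proj S.B0 (bm (pb k)))) := (S.f_proj _ (S.hB0.proj_mem _)).symm
      _ = proj S.Q (proj S.B1 (bm (pb (k+1)))) := by rw [hLink k]
      _ = proj S.Q (bm (pb (k+1))) := projQQ1 _
  have gconst : ∀ k : ℤ, proj S.Q (bm (pb k)) = proj S.Q (bm (pb i)) := by
    have h0 : ∀ k : ℤ, proj S.Q (bm (pb k)) = proj S.Q (bm (pb 0)) := by
      intro k
      induction k using Int.induction_on with
      | zero => rfl
      | succ n ih => rw [← gstep, ih]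
      | pred n ih =>
        have h := gstep (-(n : ℤ) - 1)
        rw [sub_add_cancel] at h
        rw [h, ih]
    intro k; rw [h0 k, h0 i]
  have hq_leM : ∀ k : ℤ, q ≤ proj S.Q (bm (pb k)) := fun k => by
    rw [gconst k]; exact proj_mono' hpMi
  have hq_leP : ∀ k : ℤ, q ≤ proj S.Q (pb k).1 := fun k => by
    rw [← (hBl k).2.2.2]; exact hq_leM k
  have hprojq : ∀ k : ℤ, proj S.Q (q ⊓ (pb k).1) = q := by
    intro k
    rw [inf_comm, proj_inf_of_mem S.hQ _ hqQ, inf_eq_right.2 (hq_leP k)]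
  have hInv := mseq_inv S pb hLink hqQ i hpq hpMi hqdef.symm
  have hLm := mseq_link S pb hLink hqQ i hpq hpMi hqdef.symm
  refine ⟨qbfun S pb i q p, ⟨?_, ?_, ?_⟩, ?_, ?_, ?_⟩
  · -- each coordinate is in the blowup
    intro k
    by_cases h1 : k = i
    · subst h1
      refine ⟨?_, ?_, ?_, ?_⟩ <;> simp only [qbfun, if_pos rfl]
      · exact hpP
      · exact S.hB0.1
      · exact S.hB1.1
      · simp [bm]
    · refine ⟨?_, ?_, ?_, ?_⟩
      · rw [qbfun_fst S pb i q p h1]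
        exact h_meet _ ((hBl k).1) q hqQ hq_ne (hq_leP k)
      · simp only [qbfun, if_neg h1]
        split_ifs
        · exact S.hB0.inf_mem (S.hQB0 hqQ) (hBl k).2.1
        · exact S.hB0.inf_mem (hBl k).2.1 (S.G_mem _)
      · simp only [qbfun, if_neg h1]
        split_ifs
        · exact S.hB1.inf_mem (hBl k).2.2.1 (S.F_mem _)
        · exact S.hB1.inf_mem (S.hQB1 hqQ) (hBl k).2.2.1
      · rw [qbfun_bm, qbfun_fst S pb i q p h1, hprojq k]
        exact (hInv k).2.2
  · -- the linking equations
    intro k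
    rw [qbfun_bm, qbfun_bm]
    exact hLm k
  · -- cofinitely many coordinates satisfy R
    refine Set.Finite.subset (hFin.union (Set.finite_singleton i)) ?_
    intro k hk
    simp only [Set.mem_setOf_eq] at hk
    by_cases h1 : k = i
    · exact Or.inr (by simp [h1])
    · refine Or.inl ?_
      simp only [Set.mem_setOf_eq]
      intro hR
      apply hk
      rw [qbfun_fst S pb i q p h1, hprojq k]
      exact h_Rmeet _ ((hBl k).1) q hqQ hqP hq_ne (hq_leP k) hR
  · -- the extension is below pb
    intro k
    constructor
    · by_cases h1 : k = i
      · subst h1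
        simp only [qbfun, if_pos rfl]
        exact hpMi.trans (inf_le_left.trans inf_le_left)
      · rw [qbfun_fst S pb i q p h1]
        exact inf_le_right
    · rw [qbfun_bm]
      exact (hInv k).2.1
  · simp [qbfun]
  · simp [qbfun]


end Stmt9
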